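/- Let Ψ : M → N be a proper monoid morphism between abelian topological monoids, and suppose the multiplication map of N is proper. Then the multiplication map of M is proper. -/

import Mathlib

/-- if `Ψ : M → N` is a proper monoid morphism between abelian topological
monoids and the addition of `N` is a proper map, then the addition of `M` is a proper
map. -/
theorem proper_mul_of_proper_morphism {M N : Type*}
    [TopologicalSpace M] [TopologicalSpace N]
    [AddCommMonoid M] [AddCommMonoid N]
    [ContinuousAdd M] [ContinuousAdd N]
    [T2Space M] [T2Space N] [LocallyCompactSpace M] [LocallyCompactSpace N]
    (Ψ : M →+ N) (hprop : IsProperMap (Ψ : M → N))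
    (hmulN : IsProperMap (fun p : N × N => p.1 + p.2)) :
    IsProperMap (fun p : M × M => p.1 + p.2) := by
  rw [isProperMap_iff_isCompact_preimage]
  refine ⟨continuous_add, fun K hK => ?_⟩
  have h1 : IsProperMap (Prod.map (Ψ : M → N) (Ψ : M → N)) := hprop.prodMap hprop
  have h2 : IsProperMap ((fun p : N × N => p.1 + p.2) ∘ Prod.map (Ψ : M → N) Ψ) :=
    hmulN.comp h1
  have hKim : IsCompact ((Ψ : M → N) '' K) := hK.image hprop.continuous
  have hbig : IsCompact (((fun p : N × N => p.1 + p.2) ∘ Prod.map (Ψ : M → N) Ψ) ⁻¹'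
      ((Ψ : M → N) '' K)) := h2.isCompact_preimage hKim
  refine hbig.of_isClosed_subset ?_ ?_
  · exact (hK.isClosed.preimage continuous_add)
  · rintro ⟨a, b⟩ hab
    exact ⟨a + b, hab, by simp [map_add]⟩
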